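/- Let T : 𝒵^{n+1} → [0,∞) be measurable with T not a.s. zero under an exchangeable P. Then ε(z^{n+1}) = T(z^{n+1}) / ((1/(n+1)!) ∑_{π ∈ Π(n+1)} T(π z^{n+1})) (defined as 1 when the denominator is 0) satisfies E_P[ε(Z^{n+1})] ≤ 1 for every exchangeable probability measure P on 𝒵^{n+1}; i.e., ε is a valid e-value for the exchangeable model. -/

import Mathlib

open MeasureTheory
open scoped ENNReal NNReal

/-- The permutation-averaged statistic
`ε(z) = T(z) / ((1/(n+1)!) ∑_π T(πz))` (set to `1` when the denominator is `0`)
is a valid e-value for the exchangeable model: its expectation is at most `1`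
under every exchangeable probability measure `P` under which `T` is not a.s.
zero. -/
theorem stmt_13 {Z : Type*} [MeasurableSpace Z] (n : ℕ)
    (T : (Fin (n + 1) → Z) → ℝ≥0) (hT : Measurable T) :
    ∀ P : Measure (Fin (n + 1) → Z), IsProbabilityMeasure P →
      (∀ π : Equiv.Perm (Fin (n + 1)), Measure.map (fun z => z ∘ π) P = P) →
      ¬ (T =ᵐ[P] 0) →
      ∫⁻ z,
        (if ((↑(Nat.factorial (n + 1)) : ℝ≥0∞)⁻¹ *
              ∑ π : Equiv.Perm (Fin (n + 1)), (T (z ∘ π) : ℝ≥0∞)) = 0 then 1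
          else (T z : ℝ≥0∞) /
            ((↑(Nat.factorial (n + 1)) : ℝ≥0∞)⁻¹ *
              ∑ π : Equiv.Perm (Fin (n + 1)), (T (z ∘ π) : ℝ≥0∞))) ∂P ≤ 1 := by
  intro P hP hExch _hTne
  classical
  set N : ℝ≥0∞ := (Nat.factorial (n + 1) : ℝ≥0∞) with hNdef
  have hN0 : N ≠ 0 := by
    simp [hNdef, Nat.factorial_ne_zero]
  have hNT : N ≠ ∞ := by simp [hNdef]
  set S : (Fin (n + 1) → Z) → ℝ≥0∞ :=
    fun z => ∑ π : Equiv.Perm (Fin (n + 1)), (T (z ∘ π) : ℝ≥0∞) with hSdef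
  have hcomp : ∀ π : Equiv.Perm (Fin (n + 1)),
      Measurable fun z : (Fin (n + 1) → Z) => z ∘ π :=
    fun π => measurable_pi_lambda _ fun i => measurable_pi_apply _
  have hTm : ∀ π : Equiv.Perm (Fin (n + 1)),
      Measurable fun z => (T (z ∘ π) : ℝ≥0∞) :=
    fun π => (measurable_coe_nnreal_ennreal.comp hT).comp (hcomp π)
  have hSm : Measurable S := Finset.measurable_sum _ fun π _ => hTm π
  have hSne : ∀ z, S z ≠ ∞ := by
    intro z
    simp only [hSdef]
    exact (ENNReal.sum_lt_top.mpr fun π _ => ENNReal.coe_lt_top).ne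
  have hSinv : ∀ (π : Equiv.Perm (Fin (n + 1))) z, S (z ∘ π) = S z := by
    intro π z
    simp only [hSdef]
    rw [← Equiv.sum_comp (Equiv.mulLeft π) (fun σ => (T (z ∘ σ) : ℝ≥0∞))]
    refine Finset.sum_congr rfl fun σ _ => ?_
    have hzz : (z ∘ ⇑π) ∘ ⇑σ = z ∘ ⇑(Equiv.mulLeft π σ) := by
      ext i; simp [Equiv.Perm.mul_apply]
    rw [hzz]
  have hTle : ∀ z, (T z : ℝ≥0∞) ≤ S z := by
    intro z
    have := Finset.single_le_sum (f := fun π : Equiv.Perm (Fin (n + 1)) => (T (z ∘ π) : ℝ≥0∞))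
      (s := Finset.univ) (fun _ _ => zero_le) (Finset.mem_univ 1)
    simpa using this
  have hFm : Measurable fun z => (T z : ℝ≥0∞) * (S z)⁻¹ :=
    (measurable_coe_nnreal_ennreal.comp hT).mul hSm.inv
  -- key invariance: each permuted integral equals the unpermuted one
  have key : ∀ π : Equiv.Perm (Fin (n + 1)),
      ∫⁻ z, (T (z ∘ π) : ℝ≥0∞) * (S z)⁻¹ ∂P
        = ∫⁻ z, (T z : ℝ≥0∞) * (S z)⁻¹ ∂P := by
    intro π
    calc ∫⁻ z, (T (z ∘ π) : ℝ≥0∞) * (S z)⁻¹ ∂P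
        = ∫⁻ z, (T (z ∘ π) : ℝ≥0∞) * (S (z ∘ π))⁻¹ ∂P := by
          simp_rw [hSinv]
      _ = ∫⁻ w, (T w : ℝ≥0∞) * (S w)⁻¹ ∂(Measure.map (fun z => z ∘ π) P) :=
          (lintegral_map hFm (hcomp π)).symm
      _ = _ := by rw [hExch π]
  have hmeas0 : MeasurableSet {z : Fin (n + 1) → Z | S z = 0} :=
    hSm (measurableSet_singleton 0)
  -- the sum of the permuted integrals is the measure of {S ≠ 0}
  have hsum : N * ∫⁻ z, (T z : ℝ≥0∞) * (S z)⁻¹ ∂P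
      = P {z | S z = 0}ᶜ := by
    have h1 : ∫⁻ z, ∑ π : Equiv.Perm (Fin (n + 1)), (T (z ∘ π) : ℝ≥0∞) * (S z)⁻¹ ∂P
        = ∑ π : Equiv.Perm (Fin (n + 1)), ∫⁻ z, (T (z ∘ π) : ℝ≥0∞) * (S z)⁻¹ ∂P :=
      lintegral_finset_sum _ fun π _ => (hTm π).mul hSm.inv
    have h2 : ∀ z, ∑ π : Equiv.Perm (Fin (n + 1)), (T (z ∘ π) : ℝ≥0∞) * (S z)⁻¹
        = Set.indicator {z : Fin (n + 1) → Z | S z = 0}ᶜ (fun _ => 1) z := by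
      intro z
      rw [← Finset.sum_mul]
      show S z * (S z)⁻¹ = _
      by_cases h : S z = 0
      · simp [h, Set.indicator]
      · rw [ENNReal.mul_inv_cancel h (hSne z)]
        simp [Set.indicator, h]
    have h3 : ∑ π : Equiv.Perm (Fin (n + 1)), ∫⁻ z, (T (z ∘ π) : ℝ≥0∞) * (S z)⁻¹ ∂P
        = N * ∫⁻ z, (T z : ℝ≥0∞) * (S z)⁻¹ ∂P := by
      rw [Finset.sum_congr rfl fun π _ => key π, Finset.sum_const]
      simp [hNdef, nsmul_eq_mul, Fintype.card_perm, Fintype.card_fin]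
    rw [← h3, ← h1]
    simp_rw [h2]
    rw [lintegral_indicator hmeas0.compl, setLIntegral_one]
  -- rewrite the integrand
  have hint : ∀ z,
      (if (N⁻¹ * S z) = 0 then (1 : ℝ≥0∞)
        else (T z : ℝ≥0∞) / (N⁻¹ * S z))
      = Set.indicator {z : Fin (n + 1) → Z | S z = 0} (1 : (Fin (n + 1) → Z) → ℝ≥0∞) z
        + N * ((T z : ℝ≥0∞) * (S z)⁻¹) := by
    intro z
    have hcond : (N⁻¹ * S z = 0) ↔ S z = 0 := by
      constructor
      · intro h
        rcases mul_eq_zero.mp h with h | h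
        · exact absurd h (ENNReal.inv_ne_zero.mpr hNT)
        · exact h
      · intro h; simp [h]
    by_cases h : S z = 0
    · have hT0 : (T z : ℝ≥0∞) = 0 := le_antisymm (h ▸ hTle z) (zero_le)
      simp [hcond.mpr h, Set.indicator, h, hT0]
    · rw [if_neg (fun hh => h (hcond.mp hh))]
      rw [ENNReal.div_eq_inv_mul, ENNReal.mul_inv (Or.inl (ENNReal.inv_ne_zero.mpr hNT))
        (Or.inl (ENNReal.inv_ne_top.mpr hN0)), inv_inv]
      simp [Set.indicator, h, mul_comm, mul_assoc, mul_left_comm]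
  calc ∫⁻ z, (if (N⁻¹ * S z) = 0 then (1 : ℝ≥0∞)
        else (T z : ℝ≥0∞) / (N⁻¹ * S z)) ∂P
      = ∫⁻ z, (Set.indicator {z : Fin (n + 1) → Z | S z = 0} (1 : (Fin (n + 1) → Z) → ℝ≥0∞) z
          + N * ((T z : ℝ≥0∞) * (S z)⁻¹)) ∂P := by simp_rw [hint]
    _ = P {z | S z = 0} + N * ∫⁻ z, (T z : ℝ≥0∞) * (S z)⁻¹ ∂P := by
        rw [lintegral_add_left (measurable_one.indicator hmeas0),
          lintegral_indicator hmeas0, lintegral_const_mul _ hFm]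
        simp only [Pi.one_apply, setLIntegral_one]
    _ = P {z | S z = 0} + P {z | S z = 0}ᶜ := by rw [hsum]
    _ = 1 := by rw [measure_add_measure_compl hmeas0]; exact measure_univ
    _ ≤ 1 := le_rfl
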